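/- Let ℓ ≥ 1, m = 2ℓ, and let A be a real skew-symmetric m×m matrix with det(A^{(2k)}) ≠ 0 for k = 1, …, ℓ. Let J be the m×m block diagonal skew-symmetric matrix whose ℓ diagonal 2×2 blocks are [[0,-1],[1,0]]. Then there exists a unique real m×m matrix B such that A = B · J · Bᵀ, where B is lower block triangular with respect to the partition of indices into consecutive pairs (i.e. B i j = 0 whenever ⌊i/2⌋ < ⌊j/2⌋), and for each k = 1, …, ℓ the k-th diagonal 2×2 block of B is of the form [[r,0],[0,εr]] with r > 0 and ε = ±1. -/

import Mathlib

open Matrix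

/-- The `2ℓ × 2ℓ` block diagonal skew-symmetric matrix whose `ℓ` diagonal `2 × 2`
blocks are `[[0, -1], [1, 0]]`. -/
def skewJ (ℓ : ℕ) : Matrix (Fin (2 * ℓ)) (Fin (2 * ℓ)) ℝ :=
  Matrix.of fun i j =>
    if (i : ℕ) / 2 = (j : ℕ) / 2 then
      if (i : ℕ) % 2 = 0 ∧ (j : ℕ) % 2 = 1 then -1
      else if (i : ℕ) % 2 = 1 ∧ (j : ℕ) % 2 = 0 then 1
      else 0
    else 0

section Helpers
set_option linter.unusedSectionVars false
variable {α : Type*} [CommRing α] {l m n p q : Type*} [Fintype m] [Fintype n]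

lemma submatrix_mul_left' [Fintype l] (f : p → l) (M : Matrix l m α) (N : Matrix m n α) :
    M.submatrix f id * N = (M * N).submatrix f id := by
  ext i j; simp [mul_apply]

lemma submatrix_mul_submatrix' (f : p → l) (g : q → n) (M : Matrix l m α) (N : Matrix m n α) :
    M.submatrix f id * N.submatrix id g = (M * N).submatrix f g := by
  ext i j; simp [mul_apply]
end Helpers

lemma transpose_two (a b c d : ℝ) : (!![a,b;c,d])ᵀ = !![a,c;b,d] := by
  ext i j; fin_cases i <;> fin_cases j <;> simp

def J2 : Matrix (Fin 2) (Fin 2) ℝ := !![0,-1;1,0]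

lemma J2_transpose : J2ᵀ = -J2 := by
  rw [J2, transpose_two]; norm_num

lemma conj_J2 (r ε : ℝ) : !![r,0;0,ε*r] * J2 * !![r,0;0,ε*r]ᵀ = !![0, -(ε*r^2); ε*r^2, 0] := by
  rw [transpose_two]
  ext i j
  fin_cases i <;> fin_cases j <;>
    simp [J2, mul_apply, Fin.sum_univ_two] <;> ring

lemma A11_inv (a : ℝ) (ha : a ≠ 0) :
    (!![0,a;-a,0] : Matrix (Fin 2) (Fin 2) ℝ)⁻¹ = !![0,-a⁻¹;a⁻¹,0] := by
  apply inv_eq_right_inv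
  ext i j
  fin_cases i <;> fin_cases j <;>
    simp [mul_apply, Fin.sum_univ_two, Matrix.one_apply] <;> field_simp

lemma M0_right_inv (r ε : ℝ) (hr : r ≠ 0) (hε : ε = 1 ∨ ε = -1) :
    (J2 * !![r,0;0,ε*r]ᵀ) * !![0, r⁻¹; -(ε*r)⁻¹, 0] = 1 := by
  rw [transpose_two]
  rcases hε with h | h <;> subst h <;>
  · ext i j
    fin_cases i <;> fin_cases j <;>
      simp [J2, mul_apply, Fin.sum_univ_two, Matrix.one_apply] <;> field_simp

lemma M0inv_conj (r ε a : ℝ) (hr : r ≠ 0) (hε : ε = 1 ∨ ε = -1) (hεr2 : ε * r^2 = -a) :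
    !![0, r⁻¹; -(ε*r)⁻¹, 0] * J2 * (!![0, r⁻¹; -(ε*r)⁻¹, 0])ᵀ = - !![0,-a⁻¹;a⁻¹,0] := by
  have ha' : a = -(ε*r^2) := by linarith
  subst ha'
  rw [transpose_two]
  ext i j
  fin_cases i <;> fin_cases j <;>
    simp [J2, mul_apply, Fin.sum_univ_two] <;>
  · rcases hε with h | h <;> subst h <;> field_simp <;> ring

lemma sq_determines (a r r₂ ε ε₂ : ℝ) (ha : a ≠ 0) (hr0 : 0 < r) (hr2 : r^2 = |a|)
    (hr₂ : 0 < r₂) (hε₂ : ε₂ = 1 ∨ ε₂ = -1)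
    (hεr2 : ε * r^2 = -a) (hr₂a : ε₂ * r₂^2 = -a) : r₂ = r ∧ ε₂ = ε := by
  have h2 : r₂^2 = r^2 := by
    rw [hr2]
    rcases hε₂ with h|h
    · rw [h, one_mul] at hr₂a
      rw [abs_of_neg (by nlinarith [sq_nonneg r₂] : a < 0)]
      linarith
    · rw [h] at hr₂a
      rw [abs_of_pos (by nlinarith [sq_nonneg r₂] : 0 < a)]
      linarith
  have hrr : r₂ = r := by
    calc r₂ = Real.sqrt (r₂^2) := (Real.sqrt_sq hr₂.le).symm
      _ = Real.sqrt (r^2) := by rw [h2]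
      _ = r := Real.sqrt_sq hr0.le
  refine ⟨hrr, ?_⟩
  rw [hrr] at hr₂a
  have h' : ε₂ * r^2 = ε * r^2 := by rw [hr₂a, hεr2]
  exact mul_right_cancel₀ (by positivity) h'

def Pred (ℓ : ℕ) (A B : Matrix (Fin (2*ℓ)) (Fin (2*ℓ)) ℝ) : Prop :=
  (∀ i j : Fin (2 * ℓ), (i : ℕ) / 2 < (j : ℕ) / 2 → B i j = 0) ∧
  (∀ k : ℕ, ∀ hk : k < ℓ, ∃ r : ℝ, 0 < r ∧ ∃ ε : ℝ, (ε = 1 ∨ ε = -1) ∧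
    B ⟨2 * k, by have := hk; omega⟩ ⟨2 * k, by have := hk; omega⟩ = r ∧
    B ⟨2 * k, by have := hk; omega⟩ ⟨2 * k + 1, by have := hk; omega⟩ = 0 ∧
    B ⟨2 * k + 1, by have := hk; omega⟩ ⟨2 * k, by have := hk; omega⟩ = 0 ∧
    B ⟨2 * k + 1, by have := hk; omega⟩ ⟨2 * k + 1, by have := hk; omega⟩ = ε * r) ∧
  A = B * skewJ ℓ * Bᵀ

def eqv (ℓ : ℕ) : Fin 2 ⊕ Fin (2*ℓ) ≃ Fin (2*(ℓ+1)) :=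
  finSumFinEquiv.trans (finCongr (by ring))

@[simp] lemma eqv_inl (ℓ : ℕ) (i : Fin 2) : ((eqv ℓ) (Sum.inl i) : ℕ) = i := by
  simp [eqv]

@[simp] lemma eqv_inr (ℓ : ℕ) (j : Fin (2*ℓ)) : ((eqv ℓ) (Sum.inr j) : ℕ) = 2 + j := by
  simp [eqv]; omega

lemma skewJ_block (ℓ : ℕ) :
    (skewJ (ℓ+1)).submatrix (eqv ℓ) (eqv ℓ) = fromBlocks J2 0 0 (skewJ ℓ) := by
  ext i j
  rcases i with i | i <;> rcases j with j | j <;>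
    simp only [submatrix_apply, fromBlocks_apply₁₁, fromBlocks_apply₁₂,
      fromBlocks_apply₂₁, fromBlocks_apply₂₂, skewJ, of_apply, eqv_inl, eqv_inr,
      Matrix.zero_apply]
  · fin_cases i <;> fin_cases j <;> norm_num [J2]
  · rw [if_neg (by omega)]
  · rw [if_neg (by omega)]
  · have h1 : (2+(i:ℕ))/2 = (2+(j:ℕ))/2 ↔ (i:ℕ)/2 = (j:ℕ)/2 := by omega
    have h2 : (2+(i:ℕ)) % 2 = (i:ℕ) % 2 := by omega
    have h3 : (2+(j:ℕ)) % 2 = (j:ℕ) % 2 := by omega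
    rw [h2, h3]
    by_cases h : (i:ℕ)/2 = (j:ℕ)/2 <;> simp [h, h1]

set_option maxHeartbeats 4000000 in
theorem key (ℓ : ℕ) : ∀ A : Matrix (Fin (2*ℓ)) (Fin (2*ℓ)) ℝ, Aᵀ = -A →
    (∀ k : ℕ, 1 ≤ k → ∀ hk : 2 * k ≤ 2 * ℓ,
      (A.submatrix (Fin.castLE hk) (Fin.castLE hk)).det ≠ 0) →
    ∃! B, Pred ℓ A B := by
  induction ℓ with
  | zero =>
    intro A _ _
    refine ⟨A, ⟨fun i j _ => absurd i.isLt (by omega), fun k hk => absurd hk (by omega),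
      by ext i j; exact absurd i.isLt (by omega)⟩, fun B₂ _ => by
        ext i j; exact absurd i.isLt (by omega)⟩
  | succ ℓ IH =>
    intro A hskew hdet
    set e := eqv ℓ with he
    set A' := A.submatrix e e with hA'def
    have hA'skew : A'ᵀ = -A' := by
      ext s t
      have h := congrFun (congrFun hskew (e s)) (e t)
      simp only [transpose_apply, neg_apply] at h ⊢
      simpa [hA'def] using h
    have hswap : ∀ s t, A' t s = -A' s t := by
      intro s t
      have h := congrFun (congrFun hA'skew s) t
      simpa using h
    set A11 := A'.toBlocks₁₁ with h11def
    set A12 := A'.toBlocks₁₂ with h12def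
    set A21 := A'.toBlocks₂₁ with h21def
    set A22 := A'.toBlocks₂₂ with h22def
    have hblocks : A' = fromBlocks A11 A12 A21 A22 := (fromBlocks_toBlocks A').symm
    have hA12 : A12 = -A21ᵀ := by
      ext i j
      simp only [h12def, h21def, toBlocks₁₂, toBlocks₂₁, Matrix.neg_apply, transpose_apply, of_apply]
      rw [hswap]
    have hA22t : A22ᵀ = -A22 := by
      ext i j
      simp only [h22def, toBlocks₂₂, Matrix.neg_apply, transpose_apply, of_apply]
      rw [hswap]
    have hA21t : A21ᵀ = -A12 := by rw [hA12]; simp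
    have hA12t : A12ᵀ = -A21 := by rw [hA12]; simp
    set a := A' (Sum.inl 0) (Sum.inl 1) with hadef
    have hdiag0 : ∀ s, A' s s = 0 := fun s => by have := hswap s s; linarith
    have hA11 : A11 = !![0, a; -a, 0] := by
      ext i j
      fin_cases i <;> fin_cases j <;> simp only [h11def, toBlocks₁₁, of_apply] <;> simp
      · exact hdiag0 _
      · exact hadef.symm
      · exact hswap _ _
      · exact hdiag0 _
    have ha : a ≠ 0 := by
      have hk1 : 2*1 ≤ 2*(ℓ+1) := by omega
      have hd := hdet 1 le_rfl hk1
      have hsub : A.submatrix (Fin.castLE hk1) (Fin.castLE hk1) = A11 := by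
        ext i j
        simp only [submatrix_apply, h11def, toBlocks₁₁, of_apply, hA'def]
        congr 1 <;> apply Fin.ext <;> simp
      rw [hsub, hA11] at hd
      intro h0
      exact hd (by rw [Matrix.det_fin_two_of, h0]; ring)
    have detA11 : A11.det = a * a := by
      rw [hA11, Matrix.det_fin_two_of]; ring
    have hU : IsUnit A11.det := by
      rw [detA11]; exact (mul_ne_zero ha ha).isUnit
    haveI : Invertible A11 := A11.invertibleOfIsUnitDet hU
    set S := A22 - A21 * A11⁻¹ * A12 with hSdef
    have detrel : ∀ k (hk : 2*(k+1) ≤ 2*(ℓ+1)) (hk' : 2*k ≤ 2*ℓ),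
        (A.submatrix (Fin.castLE hk) (Fin.castLE hk)).det
          = A11.det * (S.submatrix (Fin.castLE hk') (Fin.castLE hk')).det := by
      intro k hk hk'
      rw [← det_submatrix_equiv_self (eqv k) (A.submatrix (Fin.castLE hk) (Fin.castLE hk))]
      have heq : (A.submatrix (Fin.castLE hk) (Fin.castLE hk)).submatrix (eqv k) (eqv k)
          = fromBlocks A11 (A12.submatrix id (Fin.castLE hk'))
              (A21.submatrix (Fin.castLE hk') id)
              (A22.submatrix (Fin.castLE hk') (Fin.castLE hk')) := by
        ext s t
        rcases s with i|i <;> rcases t with j|j <;>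
          simp only [submatrix_apply, fromBlocks_apply₁₁, fromBlocks_apply₁₂,
            fromBlocks_apply₂₁, fromBlocks_apply₂₂, h11def, h12def, h21def, h22def,
            toBlocks₁₁, toBlocks₁₂, toBlocks₂₁, toBlocks₂₂, of_apply, hA'def, id] <;>
          (congr 1 <;> apply Fin.ext <;> simp <;> omega)
      rw [heq, det_fromBlocks₁₁]
      congr 1
      have hsch : A22.submatrix (Fin.castLE hk') (Fin.castLE hk')
          - A21.submatrix (Fin.castLE hk') id * ⅟A11 * A12.submatrix id (Fin.castLE hk')
          = S.submatrix (Fin.castLE hk') (Fin.castLE hk') := by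
        rw [invOf_eq_nonsing_inv, submatrix_mul_left', submatrix_mul_submatrix', hSdef]
        ext i j; simp
      rw [hsch]
    have hdetS : ∀ k : ℕ, 1 ≤ k → ∀ hk' : 2 * k ≤ 2 * ℓ,
        (S.submatrix (Fin.castLE hk') (Fin.castLE hk')).det ≠ 0 := by
      intro k hk1 hk'
      have hk : 2*(k+1) ≤ 2*(ℓ+1) := by omega
      have hd := hdet (k+1) (by omega) hk
      rw [detrel k hk hk'] at hd
      exact fun h => hd (by rw [h, mul_zero])
    set A11inv := (!![0,-a⁻¹;a⁻¹,0] : Matrix (Fin 2) (Fin 2) ℝ) with hiddef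
    have hA11i : A11⁻¹ = A11inv := by rw [hA11, hiddef]; exact A11_inv a ha
    have hA11it : A11invᵀ = -A11inv := by
      rw [hiddef, transpose_two]
      ext i j; fin_cases i <;> fin_cases j <;> simp
    have hSskew : Sᵀ = -S := by
      rw [hSdef, hA11i, transpose_sub, transpose_mul, transpose_mul, hA22t, hA12t, hA21t, hA11it]
      simp only [Matrix.neg_mul, Matrix.mul_neg, neg_neg, neg_sub, Matrix.mul_assoc]
      abel
    obtain ⟨B', hB'P, hB'uniq⟩ := IH S hSskew hdetS
    obtain ⟨hB'low, hB'diag, hB'fac⟩ := hB'P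
    set r := Real.sqrt |a| with hrdef
    have hr0 : 0 < r := Real.sqrt_pos.mpr (abs_pos.mpr ha)
    have hr2 : r^2 = |a| := Real.sq_sqrt (abs_nonneg a)
    set ε := if 0 < a then (-1:ℝ) else 1 with hεdef
    have hε : ε = 1 ∨ ε = -1 := by rw [hεdef]; split <;> simp
    have hεr2 : ε * r^2 = -a := by
      rw [hεdef, hr2]
      rcases lt_trichotomy a 0 with h|h|h
      · rw [if_neg (by linarith), abs_of_neg h]; ring
      · exact absurd h ha
      · rw [if_pos h, abs_of_pos h]; ring
    set B11 := (!![r,0;0,ε*r] : Matrix (Fin 2) (Fin 2) ℝ) with hB11def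
    have hB11fac : B11 * J2 * B11ᵀ = A11 := by
      rw [hB11def, conj_J2, hA11, hεr2]; norm_num
    set M0inv := (!![0, r⁻¹; -(ε*r)⁻¹, 0] : Matrix (Fin 2) (Fin 2) ℝ) with hM0def
    have hM0 : (J2 * B11ᵀ) * M0inv = 1 := by
      rw [hB11def, hM0def]; exact M0_right_inv r ε hr0.ne' hε
    have hM0' : M0inv * (J2 * B11ᵀ) = 1 := mul_eq_one_comm.mp hM0
    set C := A21 * M0inv with hCdef
    have hCfac : C * J2 * B11ᵀ = A21 := by
      calc C * J2 * B11ᵀ = A21 * (M0inv * (J2 * B11ᵀ)) := by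
            rw [hCdef, Matrix.mul_assoc, Matrix.mul_assoc]
        _ = A21 := by rw [hM0', Matrix.mul_one]
    have hB11Ct : B11 * J2 * Cᵀ = A12 := by
      have h := congrArg Matrix.transpose hCfac
      rw [transpose_mul, transpose_mul, transpose_transpose, J2_transpose, hA21t] at h
      apply neg_injective
      rw [← h]
      simp only [Matrix.neg_mul, Matrix.mul_neg, Matrix.mul_assoc]
    have hCJC : C * J2 * Cᵀ = A21 * A11⁻¹ * A12 := by
      rw [hA11i]
      have hCt : Cᵀ = M0invᵀ * A21ᵀ := by rw [hCdef, transpose_mul]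
      have hmid : M0inv * J2 * M0invᵀ = -A11inv := by
        rw [hM0def, hiddef]; exact M0inv_conj r ε a hr0.ne' hε hεr2
      calc C * J2 * Cᵀ = A21 * (M0inv * J2 * M0invᵀ) * A21ᵀ := by
            rw [hCdef, hCt, ← Matrix.mul_assoc, Matrix.mul_assoc A21 M0inv J2,
              Matrix.mul_assoc A21 (M0inv * J2) M0invᵀ]
        _ = A21 * (-A11inv) * (-A12) := by rw [hmid, hA21t]
        _ = A21 * A11inv * A12 := by
            simp only [Matrix.mul_neg, Matrix.neg_mul, neg_neg]
    set J' := fromBlocks J2 (0 : Matrix (Fin 2) (Fin (2*ℓ)) ℝ) 0 (skewJ ℓ) with hJ'def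
    have hJ : skewJ (ℓ+1) = J'.submatrix e.symm e.symm := by
      rw [hJ'def, ← skewJ_block ℓ, ← he, submatrix_submatrix, Equiv.self_comp_symm,
        submatrix_id_id]
    set M := fromBlocks B11 0 C B' with hMdef
    have hsum : A21 * A11⁻¹ * A12 + S = A22 := by rw [hSdef]; abel
    have hMfac : M * J' * Mᵀ = A' := by
      rw [hMdef, hJ'def, fromBlocks_transpose, fromBlocks_multiply, fromBlocks_multiply, hblocks]
      simp only [Matrix.mul_zero, Matrix.zero_mul, add_zero, zero_add,
        Matrix.transpose_zero]
      rw [hB11fac, hB11Ct, hCfac, ← hB'fac, hCJC, hsum]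
    set B := M.submatrix e.symm e.symm with hBdef
    have hBfac : A = B * skewJ (ℓ+1) * Bᵀ := by
      rw [hBdef, hJ, transpose_submatrix, submatrix_mul_equiv, submatrix_mul_equiv, hMfac,
        hA'def]
      ext i j; simp
    have he_symm_inl : ∀ (v : Fin (2*(ℓ+1))) (i : Fin 2), (v:ℕ) = (i:ℕ) →
        e.symm v = Sum.inl i := by
      intro v i h
      rw [Equiv.symm_apply_eq]
      exact Fin.ext (by simpa [he] using h)
    have he_symm_inr : ∀ (v : Fin (2*(ℓ+1))) (j : Fin (2*ℓ)), (v:ℕ) = 2 + (j:ℕ) →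
        e.symm v = Sum.inr j := by
      intro v j h
      rw [Equiv.symm_apply_eq]
      exact Fin.ext (by simpa [he] using h)
    have hBentry : ∀ (v w : Fin (2*(ℓ+1))) (s t : Fin 2 ⊕ Fin (2*ℓ)),
        e.symm v = s → e.symm w = t → B v w = M s t := by
      intro v w s t hs ht
      rw [hBdef]
      simp only [submatrix_apply, hs, ht]
    have hcoe_inl : ∀ (v : Fin (2*(ℓ+1))) (i' : Fin 2), e.symm v = Sum.inl i' →
        (v:ℕ) = (i':ℕ) := by
      intro v i' hv
      have : v = e (Sum.inl i') := by rw [← hv, Equiv.apply_symm_apply]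
      rw [this]; simp [he]
    have hcoe_inr : ∀ (v : Fin (2*(ℓ+1))) (i' : Fin (2*ℓ)), e.symm v = Sum.inr i' →
        (v:ℕ) = 2 + (i':ℕ) := by
      intro v i' hv
      have : v = e (Sum.inr i') := by rw [← hv, Equiv.apply_symm_apply]
      rw [this]; simp [he]
    refine ⟨B, ⟨?_, ?_, hBfac⟩, ?_⟩
    · intro i j hij
      rcases hsi : e.symm i with i' | i' <;> rcases hsj : e.symm j with j' | j'
      · have hi := hcoe_inl i i' hsi
        have hj := hcoe_inl j j' hsj
        exact absurd hij (by have h2 := i'.isLt; have h3 := j'.isLt; rw [hi, hj]; omega)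
      · rw [hBentry i j _ _ hsi hsj, hMdef, fromBlocks_apply₁₂]
        rfl
      · have hi := hcoe_inr i i' hsi
        have hj := hcoe_inl j j' hsj
        exact absurd hij (by have h3 := j'.isLt; rw [hi, hj]; omega)
      · rw [hBentry i j _ _ hsi hsj, hMdef, fromBlocks_apply₂₂]
        apply hB'low
        have hi := hcoe_inr i i' hsi
        have hj := hcoe_inr j j' hsj
        rw [hi, hj] at hij
        omega
    · intro k hk
      cases k with
      | zero =>
        refine ⟨r, hr0, ε, hε, ?_, ?_, ?_, ?_⟩
        · rw [hBentry _ _ (Sum.inl 0) (Sum.inl 0) (he_symm_inl _ _ (by norm_num))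
            (he_symm_inl _ _ (by norm_num)), hMdef, fromBlocks_apply₁₁]
          simp [hB11def]
        · rw [hBentry _ _ (Sum.inl 0) (Sum.inl 1) (he_symm_inl _ _ (by norm_num))
            (he_symm_inl _ _ (by norm_num)), hMdef, fromBlocks_apply₁₁]
          simp [hB11def]
        · rw [hBentry _ _ (Sum.inl 1) (Sum.inl 0) (he_symm_inl _ _ (by norm_num))
            (he_symm_inl _ _ (by norm_num)), hMdef, fromBlocks_apply₁₁]
          simp [hB11def]
        · rw [hBentry _ _ (Sum.inl 1) (Sum.inl 1) (he_symm_inl _ _ (by norm_num))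
            (he_symm_inl _ _ (by norm_num)), hMdef, fromBlocks_apply₁₁]
          simp [hB11def]
      | succ k =>
        obtain ⟨r', hr', ε', hε', h1, h2, h3, h4⟩ := hB'diag k (by omega)
        refine ⟨r', hr', ε', hε', ?_, ?_, ?_, ?_⟩
        · rw [hBentry _ _ (Sum.inr ⟨2*k, by omega⟩) (Sum.inr ⟨2*k, by omega⟩)
            (he_symm_inr _ _ (by simp <;> omega)) (he_symm_inr _ _ (by simp <;> omega)), hMdef,
            fromBlocks_apply₂₂]
          exact h1
        · rw [hBentry _ _ (Sum.inr ⟨2*k, by omega⟩) (Sum.inr ⟨2*k+1, by omega⟩)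
            (he_symm_inr _ _ (by simp <;> omega)) (he_symm_inr _ _ (by simp <;> omega)), hMdef,
            fromBlocks_apply₂₂]
          exact h2
        · rw [hBentry _ _ (Sum.inr ⟨2*k+1, by omega⟩) (Sum.inr ⟨2*k, by omega⟩)
            (he_symm_inr _ _ (by simp <;> omega)) (he_symm_inr _ _ (by simp <;> omega)), hMdef,
            fromBlocks_apply₂₂]
          exact h3
        · rw [hBentry _ _ (Sum.inr ⟨2*k+1, by omega⟩) (Sum.inr ⟨2*k+1, by omega⟩)
            (he_symm_inr _ _ (by simp <;> omega)) (he_symm_inr _ _ (by simp <;> omega)), hMdef,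
            fromBlocks_apply₂₂]
          exact h4
    · intro B₂ hB₂
      obtain ⟨hlow, hdiag2, hfac2⟩ := hB₂
      have heL : ∀ (i' : Fin 2) (v : Fin (2*(ℓ+1))), (v:ℕ) = (i':ℕ) →
          e (Sum.inl i') = v := fun i' v h => Fin.ext (by simp [he]; omega)
      have heR : ∀ (j' : Fin (2*ℓ)) (v : Fin (2*(ℓ+1))), (v:ℕ) = 2 + (j':ℕ) →
          e (Sum.inr j') = v := fun j' v h => Fin.ext (by simp [he]; omega)
      set M₂ := B₂.submatrix e e with hM₂def
      have hB₂e : B₂ = M₂.submatrix e.symm e.symm := by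
        ext i j; simp [hM₂def]
      have h12z : M₂.toBlocks₁₂ = 0 := by
        ext i j
        simp only [toBlocks₁₂, of_apply, hM₂def, submatrix_apply, Matrix.zero_apply]
        apply hlow
        have hi := i.isLt
        simp only [he, eqv_inl, eqv_inr]
        omega
      set b11 := M₂.toBlocks₁₁ with hb11def
      set c := M₂.toBlocks₂₁ with hcdef2
      set b' := M₂.toBlocks₂₂ with hb'def
      have hM₂blocks : M₂ = fromBlocks b11 0 c b' := by
        rw [hb11def, hcdef2, hb'def, ← h12z, fromBlocks_toBlocks]
      have hA'2 : A' = M₂ * J' * M₂ᵀ := by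
        rw [hA'def, hfac2, hB₂e, hJ, transpose_submatrix, submatrix_mul_equiv,
          submatrix_mul_equiv, submatrix_submatrix, Equiv.symm_comp_self, submatrix_id_id]
      rw [hM₂blocks, hJ'def, fromBlocks_transpose, fromBlocks_multiply, fromBlocks_multiply,
        hblocks] at hA'2
      simp only [Matrix.mul_zero, Matrix.zero_mul, add_zero, zero_add,
        Matrix.transpose_zero] at hA'2
      have g11 := congrArg Matrix.toBlocks₁₁ hA'2
      have g21 := congrArg Matrix.toBlocks₂₁ hA'2
      have g22 := congrArg Matrix.toBlocks₂₂ hA'2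
      simp only [toBlocks_fromBlocks₁₁, toBlocks_fromBlocks₂₁, toBlocks_fromBlocks₂₂]
        at g11 g21 g22
      obtain ⟨r₂, hr₂, ε₂, hε₂, k1, k2, k3, k4⟩ := hdiag2 0 (by omega)
      have e00 : e (Sum.inl ⟨0, by omega⟩) = (⟨2*0, by omega⟩ : Fin (2*(ℓ+1))) :=
        heL _ _ (by norm_num)
      have e01 : e (Sum.inl ⟨1, by omega⟩) = (⟨2*0+1, by omega⟩ : Fin (2*(ℓ+1))) :=
        heL _ _ (by norm_num)
      have hb11 : b11 = !![r₂, 0; 0, ε₂ * r₂] := by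
        ext i j
        fin_cases i <;> fin_cases j <;>
          simp only [hb11def, toBlocks₁₁, of_apply, hM₂def, submatrix_apply]
        · rw [e00]; simpa using k1
        · rw [e00, e01]; simpa using k2
        · rw [e00, e01]; simpa using k3
        · rw [e01]; simpa using k4
      have hr₂a : ε₂ * r₂^2 = -a := by
        have hthis := g11
        rw [hb11, conj_J2, hA11] at hthis
        have h10 := congrFun (congrFun hthis 1) 0
        simp at h10
        linarith
      obtain ⟨hrr, hεε⟩ := sq_determines a r r₂ ε ε₂ ha hr0 hr2 hr₂ hε₂ hεr2 hr₂a
      have hb11B : b11 = B11 := by rw [hb11, hrr, hεε, hB11def]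
      rw [hb11B] at g11 g21
      have g21' : c * (J2 * B11ᵀ) = A21 := by
        rw [← Matrix.mul_assoc]; exact g21.symm
      have hcC : c = C := by
        calc c = c * ((J2 * B11ᵀ) * M0inv) := by rw [hM0, Matrix.mul_one]
          _ = (c * (J2 * B11ᵀ)) * M0inv := by rw [← Matrix.mul_assoc]
          _ = A21 * M0inv := by rw [g21']
          _ = C := hCdef.symm
      rw [hcC] at g22
      have hb'S : S = b' * skewJ ℓ * b'ᵀ := by
        rw [hSdef, ← hCJC, g22]
        abel
      have hb'P : Pred ℓ S b' := by
        refine ⟨?_, ?_, hb'S⟩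
        · intro i' j' hij
          simp only [hb'def, toBlocks₂₂, of_apply, hM₂def, submatrix_apply]
          apply hlow
          simp only [he, eqv_inr]
          omega
        · intro k hkℓ
          obtain ⟨r', hr', ε', hε', j1, j2, j3, j4⟩ := hdiag2 (k+1) (by omega)
          refine ⟨r', hr', ε', hε', ?_, ?_, ?_, ?_⟩
          · simp only [hb'def, toBlocks₂₂, of_apply, hM₂def, submatrix_apply]
            rw [heR ⟨2*k, by omega⟩ (⟨2*(k+1), by omega⟩ : Fin (2*(ℓ+1))) (by simp <;> omega)]
            exact j1
          · simp only [hb'def, toBlocks₂₂, of_apply, hM₂def, submatrix_apply]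
            rw [heR ⟨2*k, by omega⟩ (⟨2*(k+1), by omega⟩ : Fin (2*(ℓ+1))) (by simp <;> omega),
              heR ⟨2*k+1, by omega⟩ (⟨2*(k+1)+1, by omega⟩ : Fin (2*(ℓ+1)))
                (by simp <;> omega)]
            exact j2
          · simp only [hb'def, toBlocks₂₂, of_apply, hM₂def, submatrix_apply]
            rw [heR ⟨2*k, by omega⟩ (⟨2*(k+1), by omega⟩ : Fin (2*(ℓ+1))) (by simp <;> omega),
              heR ⟨2*k+1, by omega⟩ (⟨2*(k+1)+1, by omega⟩ : Fin (2*(ℓ+1)))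
                (by simp <;> omega)]
            exact j3
          · simp only [hb'def, toBlocks₂₂, of_apply, hM₂def, submatrix_apply]
            rw [heR ⟨2*k+1, by omega⟩ (⟨2*(k+1)+1, by omega⟩ : Fin (2*(ℓ+1)))
              (by simp <;> omega)]
            exact j4
      have hb'B : b' = B' := hB'uniq b' hb'P
      rw [hB₂e, hM₂blocks, hb11B, hcC, hb'B, ← hMdef, ← hBdef]

/-- **Skew-symmetric Cholesky factorization.** If `A` is a real skew-symmetric
`2ℓ × 2ℓ` matrix with `det (A^(2k)) ≠ 0` for `k = 1, …, ℓ`, then there is a unique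
lower block triangular matrix `B` (w.r.t. consecutive pairs of indices) whose `k`-th
diagonal `2 × 2` block has the form `[[r, 0], [0, ± r]]` with `r > 0`, such that
`A = B * J * Bᵀ`. -/
theorem skew_cholesky_factorization_real (ℓ : ℕ) (hℓ : 1 ≤ ℓ)
    (A : Matrix (Fin (2 * ℓ)) (Fin (2 * ℓ)) ℝ) (hskew : Aᵀ = -A)
    (hdet : ∀ k : ℕ, 1 ≤ k → ∀ hk : 2 * k ≤ 2 * ℓ,
      (A.submatrix (Fin.castLE hk) (Fin.castLE hk)).det ≠ 0) :
    ∃! B : Matrix (Fin (2 * ℓ)) (Fin (2 * ℓ)) ℝ,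
      (∀ i j : Fin (2 * ℓ), (i : ℕ) / 2 < (j : ℕ) / 2 → B i j = 0) ∧
      (∀ k : ℕ, ∀ hk : k < ℓ, ∃ r : ℝ, 0 < r ∧ ∃ ε : ℝ, (ε = 1 ∨ ε = -1) ∧
        B ⟨2 * k, by omega⟩ ⟨2 * k, by omega⟩ = r ∧
        B ⟨2 * k, by omega⟩ ⟨2 * k + 1, by omega⟩ = 0 ∧
        B ⟨2 * k + 1, by omega⟩ ⟨2 * k, by omega⟩ = 0 ∧
        B ⟨2 * k + 1, by omega⟩ ⟨2 * k + 1, by omega⟩ = ε * r) ∧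
      A = B * skewJ ℓ * Bᵀ := by
  exact key ℓ A hskew hdet
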